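/- Let Θ ⊆ ℝ^n be a nonempty closed convex set, P : Θ → 𝒫(ℝ^m) a map assigning to each decision a Borel probability measure, ℓ : ℝ^m × ℝ^n → ℝ a loss, r : ℝ^n → ℝ a regularizer, and define J_η(θ) := ∫ ℓ(z,θ) dP(η)(z) + r(θ). Assume: (i) for every z, θ ↦ ℓ(z,θ) is γ-strongly convex on Θ; (ii) r is ρ-strongly convex on Θ and γ + ρ > 0; (iii) for every θ ∈ Θ, z ↦ ℓ(z,θ) is L_z-Lipschitz and P(η)-integrable for every η ∈ Θ; (iv) P is ε-sensitive in Kantorovich dual form: for every L ≥ 0, every L-Lipschitz function g : ℝ^m → ℝ, and all η, η' ∈ Θ, |∫ g dP(η) − ∫ g dP(η')| ≤ εL‖η − η'‖. Suppose θ_RPS ∈ Θ minimizes θ ↦ J_{θ_RPS}(θ) over Θ, and θ_RPO ∈ Θ minimizes θ ↦ J_θ(θ) over Θ. Then ‖θ_RPS − θ_RPO‖ ≤ 2εL_z/(γ+ρ). -/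

import Mathlib

open MeasureTheory

/-- Quadratic growth at a constrained minimizer of a `c`-strongly convex function. -/
lemma quad_growth_aux {E : Type*} [NormedAddCommGroup E] [InnerProductSpace ℝ E]
    {Θ : Set E} {c : ℝ} {F : E → ℝ}
    (hconv : ConvexOn ℝ Θ (fun θ => F θ - c / 2 * ‖θ‖ ^ 2))
    {x y : E} (hx : x ∈ Θ) (hy : y ∈ Θ)
    (hmin : ∀ θ ∈ Θ, F x ≤ F θ) :
    c / 2 * ‖x - y‖ ^ 2 ≤ F y - F x := by
  have hsc : StrongConvexOn Θ c F := strongConvexOn_iff_convex.mpr hconv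
  have key : ∀ b ∈ Set.Ioo (0:ℝ) 1, (1 - b) * (c / 2 * ‖x - y‖ ^ 2) ≤ F y - F x := by
    intro b hb
    have h1 := hsc.2 hx hy (show (0:ℝ) ≤ 1 - b by linarith [hb.2]) hb.1.le (by ring)
    have hmem : (1 - b) • x + b • y ∈ Θ :=
      hsc.1 hx hy (by linarith [hb.2]) hb.1.le (by ring)
    have h2 := hmin _ hmem
    simp only [smul_eq_mul] at h1
    nlinarith [hb.1]
  have ht : Filter.Tendsto (fun b : ℝ => (1 - b) * (c / 2 * ‖x - y‖ ^ 2))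
      (nhdsWithin 0 (Set.Ioi 0)) (nhds (c / 2 * ‖x - y‖ ^ 2)) := by
    have hcont : Continuous (fun b : ℝ => (1 - b) * (c / 2 * ‖x - y‖ ^ 2)) := by continuity
    simpa using (hcont.tendsto 0).mono_left nhdsWithin_le_nhds
  exact le_of_tendsto ht (Filter.eventually_of_mem
    (Ioo_mem_nhdsGT_of_mem ⟨le_refl 0, one_pos⟩) key)

/-- Inequality (14) in the proof of Theorem 2 of the paper: the distance between
the robust performatively stable point `θ_RPS` (minimizer over `Θ` of
`θ ↦ J_{θ_RPS}(θ)`) and the robust performatively optimal point `θ_RPO`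
(minimizer over `Θ` of `θ ↦ J_θ(θ)`) is at most `2εL_z/(γ+ρ)`, where
`J_η(θ) = ∫ ℓ(z,θ) dP(η)(z) + r(θ)`. Here `γ`-strong convexity of `f` on `Θ`
means convexity of `θ ↦ f θ - γ/2 * ‖θ‖²` on `Θ`, and the distribution map `P`
is `ε`-sensitive in the Kantorovich dual form. -/
theorem RPS_RPO_distance_bound {n m : ℕ} (γ ρ ε Lz : ℝ)
    (hγρ : 0 < γ + ρ) (hε : 0 ≤ ε) (hLz : 0 ≤ Lz)
    (Θ : Set (EuclideanSpace ℝ (Fin n))) (hΘne : Θ.Nonempty)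
    (hΘcl : IsClosed Θ) (hΘconv : Convex ℝ Θ)
    (P : EuclideanSpace ℝ (Fin n) → Measure (EuclideanSpace ℝ (Fin m)))
    (hP : ∀ η, IsProbabilityMeasure (P η))
    (ℓ : EuclideanSpace ℝ (Fin m) → EuclideanSpace ℝ (Fin n) → ℝ)
    (r : EuclideanSpace ℝ (Fin n) → ℝ)
    -- (i) γ-strong convexity of the loss in θ
    (hℓsc : ∀ z, ConvexOn ℝ Θ (fun θ => ℓ z θ - γ / 2 * ‖θ‖ ^ 2))
    -- (ii) ρ-strong convexity of the regularizer
    (hrsc : ConvexOn ℝ Θ (fun θ => r θ - ρ / 2 * ‖θ‖ ^ 2))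
    -- (iii) Lipschitz continuity in z and integrability
    (hLip : ∀ θ ∈ Θ, ∀ z z' : EuclideanSpace ℝ (Fin m),
      |ℓ z θ - ℓ z' θ| ≤ Lz * ‖z - z'‖)
    (hint : ∀ θ ∈ Θ, ∀ η ∈ Θ, Integrable (fun z => ℓ z θ) (P η))
    -- (iv) ε-sensitivity in Kantorovich dual form
    (hsens : ∀ L : ℝ, 0 ≤ L → ∀ g : EuclideanSpace ℝ (Fin m) → ℝ,
      (∀ z z', |g z - g z'| ≤ L * ‖z - z'‖) →
      ∀ η ∈ Θ, ∀ η' ∈ Θ,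
        |(∫ z, g z ∂(P η)) - ∫ z, g z ∂(P η')| ≤ ε * L * ‖η - η'‖)
    -- θ_RPS minimizes J_{θ_RPS} over Θ; θ_RPO minimizes θ ↦ J_θ(θ) over Θ
    (θRPS θRPO : EuclideanSpace ℝ (Fin n))
    (hRPSmem : θRPS ∈ Θ) (hRPOmem : θRPO ∈ Θ)
    (hRPS : ∀ θ ∈ Θ,
      (∫ z, ℓ z θRPS ∂(P θRPS)) + r θRPS ≤ (∫ z, ℓ z θ ∂(P θRPS)) + r θ)
    (hRPO : ∀ θ ∈ Θ,
      (∫ z, ℓ z θRPO ∂(P θRPO)) + r θRPO ≤ (∫ z, ℓ z θ ∂(P θ)) + r θ) :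
    ‖θRPS - θRPO‖ ≤ 2 * ε * Lz / (γ + ρ) := by
  have hprob := hP θRPS
  set d := ‖θRPS - θRPO‖ with hd
  set F : EuclideanSpace ℝ (Fin n) → ℝ := fun θ => (∫ z, ℓ z θ ∂(P θRPS)) + r θ with hF
  -- convexity of the integral part
  have hIconv : ConvexOn ℝ Θ (fun θ => (∫ z, ℓ z θ ∂(P θRPS)) - γ / 2 * ‖θ‖ ^ 2) := by
    refine ⟨hΘconv, ?_⟩
    intro x hx y hy a b ha hb hab
    have hmem : a • x + b • y ∈ Θ := hΘconv hx hy ha hb hab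
    set C : ℝ := γ / 2 * ‖a • x + b • y‖ ^ 2 - a * (γ / 2 * ‖x‖ ^ 2)
      - b * (γ / 2 * ‖y‖ ^ 2) with hC
    have hptwise : ∀ z, ℓ z (a • x + b • y) ≤ a * ℓ z x + b * ℓ z y + C := by
      intro z
      have := (hℓsc z).2 hx hy ha hb hab
      simp only [smul_eq_mul] at this
      simp only [hC]; linarith
    have hIx := hint x hx θRPS hRPSmem
    have hIy := hint y hy θRPS hRPSmem
    have hIc := hint _ hmem θRPS hRPSmem
    have hmono : (∫ z, ℓ z (a • x + b • y) ∂(P θRPS))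
        ≤ ∫ z, (a * ℓ z x + b * ℓ z y + C) ∂(P θRPS) :=
      integral_mono hIc (((hIx.const_mul a).add (hIy.const_mul b)).add
        (integrable_const C)) hptwise
    have hfab : Integrable (fun z => a * ℓ z x + b * ℓ z y) (P θRPS) :=
      (hIx.const_mul a).add (hIy.const_mul b)
    have heq : (∫ z, (a * ℓ z x + b * ℓ z y + C) ∂(P θRPS))
        = a * (∫ z, ℓ z x ∂(P θRPS)) + b * (∫ z, ℓ z y ∂(P θRPS)) + C := by
      rw [integral_add hfab (integrable_const C),
        integral_add (hIx.const_mul a) (hIy.const_mul b),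
        integral_const_mul, integral_const_mul, integral_const]
      simp [measure_univ]
    rw [heq] at hmono
    simp only [smul_eq_mul, hC] at *
    linarith
  -- convexity of F minus (γ+ρ)/2-quadratic
  have hFconv : ConvexOn ℝ Θ (fun θ => F θ - (γ + ρ) / 2 * ‖θ‖ ^ 2) := by
    have := hIconv.add hrsc
    convert this using 2 with θ
    · rfl
    simp only [hF, Pi.add_apply]
    ring
  -- quadratic growth at θRPS
  have h1 : (γ + ρ) / 2 * d ^ 2 ≤ F θRPO - F θRPS := by
    have := quad_growth_aux hFconv hRPSmem hRPOmem (fun θ hθ => hRPS θ hθ)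
    simpa [hd] using this
  -- optimality of θRPO compared at θRPS
  have h3 : (∫ z, ℓ z θRPO ∂(P θRPO)) + r θRPO ≤ F θRPS := hRPO θRPS hRPSmem
  -- sensitivity
  have h4 : |(∫ z, ℓ z θRPO ∂(P θRPS)) - ∫ z, ℓ z θRPO ∂(P θRPO)| ≤ ε * Lz * d :=
    hsens Lz hLz (fun z => ℓ z θRPO) (hLip θRPO hRPOmem) θRPS hRPSmem θRPO hRPOmem
  have h5 : (γ + ρ) / 2 * d ^ 2 ≤ ε * Lz * d := by
    have h3' : (∫ z, ℓ z θRPO ∂(P θRPO)) + r θRPO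
        ≤ (∫ z, ℓ z θRPS ∂(P θRPS)) + r θRPS := h3
    have h6 : F θRPO - F θRPS ≤ (∫ z, ℓ z θRPO ∂(P θRPS)) - ∫ z, ℓ z θRPO ∂(P θRPO) := by
      simp only [hF]; linarith [h3']
    calc (γ + ρ) / 2 * d ^ 2 ≤ F θRPO - F θRPS := h1
      _ ≤ (∫ z, ℓ z θRPO ∂(P θRPS)) - ∫ z, ℓ z θRPO ∂(P θRPO) := h6
      _ ≤ |(∫ z, ℓ z θRPO ∂(P θRPS)) - ∫ z, ℓ z θRPO ∂(P θRPO)| := le_abs_self _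
      _ ≤ ε * Lz * d := h4
  have hdnn : 0 ≤ d := norm_nonneg _
  rcases eq_or_lt_of_le hdnn with hd0 | hdpos
  · rw [← hd0]
    positivity
  · rw [le_div_iff₀ hγρ]
    nlinarith
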